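/- Let 0 < α ≤ 1/2, d ≥ 1, let x : [0,1] → ℝ^d be continuous with ‖x‖_α < ∞, and let D = (0 = t_0 < ⋯ < t_N = 1) be a subdivision of [0,1]. There exists a constant C (depending only on α) such that whenever t_i ≤ s ≤ t ≤ t_{i+1} for some i, one has | ∫_s^t (x(u) − x^D(u)) ⊗ (x^D)'(u) du | ≤ C ‖x‖_α² (t − s)^{2α}, where (x^D)' denotes the (piecewise constant) derivative of the piecewise linear interpolation x^D and the integral is a Bochner integral with values in ℝ^d ⊗ ℝ^d equipped with the Euclidean (Hilbert–Schmidt) tensor norm. -/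

import Mathlib

open MeasureTheory ProbabilityTheory Filter Set

noncomputable section

abbrev Vec (d : ℕ) := EuclideanSpace ℝ (Fin d)
abbrev Ten (d : ℕ) := EuclideanSpace ℝ (Fin d × Fin d)

/-- Elementary tensor `a ⊗ b` of two vectors in `ℝ^d`, realized in `ℝ^{d×d}`
with the Euclidean (Hilbert–Schmidt) norm. -/
def tens {d : ℕ} (a b : Vec d) : Ten d := WithLp.toLp 2 (fun p : Fin d × Fin d => a p.1 * b p.2)

/-- The transposition map `π` with `π (a ⊗ b) = b ⊗ a`. -/
def tswap {d : ℕ} (z : Ten d) : Ten d := WithLp.toLp 2 (fun p : Fin d × Fin d => z (p.2, p.1))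

/-- A subdivision `0 = t₀ < t₁ < ⋯ < t_N = 1` of `[0,1]`. -/
structure Subdivision : Type where
  N : ℕ
  pos : 0 < N
  t : ℕ → ℝ
  zero : t 0 = 0
  last : t N = 1
  mono : ∀ i, i < N → t i < t (i + 1)

/-- The mesh `|D|` of a subdivision. -/
def Subdivision.mesh (D : Subdivision) : ℝ :=
  (Finset.range D.N).sup' (Finset.nonempty_range_iff.mpr D.pos.ne')
    (fun i => D.t (i + 1) - D.t i)

/-- `xD` is the piecewise linear interpolation of `x` along `D`. -/
def IsPL {d : ℕ} (D : Subdivision) (x xD : ℝ → Vec d) : Prop :=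
  ∀ i, i < D.N → ∀ u ∈ Icc (D.t i) (D.t (i + 1)),
    xD u = x (D.t i) + ((u - D.t i) / (D.t (i + 1) - D.t i)) • (x (D.t (i + 1)) - x (D.t i))

/-- `xD'` is the (piecewise constant) derivative of the piecewise linear
interpolation of `x` along `D`. -/
def IsPLDeriv {d : ℕ} (D : Subdivision) (x xD' : ℝ → Vec d) : Prop :=
  ∀ i, i < D.N → ∀ u ∈ Ioo (D.t i) (D.t (i + 1)),
    xD' u = (D.t (i + 1) - D.t i)⁻¹ • (x (D.t (i + 1)) - x (D.t i))

/-- `B` is a standard `d`-dimensional Brownian motion on `[0,1]`: a.s. continuous paths,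
`B 0 = 0`, and the coordinates of all increments over `[0,1]` are jointly independent
centered Gaussians, the coordinates of the increment over `[s,t]` having variance `t - s`.
(Equivalently, the `d` coordinate processes are independent centered Gaussian processes
with covariance `min s t`.) -/
structure IsBrownian (d : ℕ) {Ω : Type*} [MeasurableSpace Ω] (P : Measure Ω)
    (B : ℝ → Ω → Vec d) : Prop where
  meas : ∀ t, Measurable (B t)
  cont : ∀ᵐ ω ∂P, ContinuousOn (fun t => B t ω) (Icc 0 1)
  init : ∀ᵐ ω ∂P, B 0 ω = 0
  incr : ∀ s t : ℝ, 0 ≤ s → s ≤ t → t ≤ 1 → ∀ i : Fin d,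
    Measure.map (fun ω => B t ω i - B s ω i) P = gaussianReal 0 (Real.toNNReal (t - s))
  indep : ∀ (n : ℕ) (τ : ℕ → ℝ), Monotone τ → (∀ k, τ k ∈ Icc (0 : ℝ) 1) →
    iIndepFun
      (fun p : Fin n × Fin d => fun ω => B (τ (p.1.val + 1)) ω p.2 - B (τ p.1.val) ω p.2) P

lemma norm_tens {d : ℕ} (a b : Vec d) : ‖tens a b‖ = ‖a‖ * ‖b‖ := by
  rw [EuclideanSpace.norm_eq, EuclideanSpace.norm_eq, EuclideanSpace.norm_eq,
    ← Real.sqrt_mul (by positivity)]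
  congr 1
  rw [Finset.sum_mul_sum, ← Fintype.sum_prod_type']
  simp [tens, mul_pow, Real.norm_eq_abs, sq_abs]

lemma Subdivision.t_mono (D : Subdivision) : ∀ i j, i ≤ j → j ≤ D.N → D.t i ≤ D.t j := by
  intro i j hij hjN
  induction j with
  | zero => simp_all
  | succ n ih =>
    rcases Nat.lt_succ_iff_lt_or_eq.mp (Nat.lt_succ_of_le hij) with h | h
    · exact (ih (Nat.lt_succ_iff.mp h) (le_trans (Nat.le_succ n) hjN)).trans
        (D.mono n (Nat.lt_of_succ_le hjN)).le
    · exact h ▸ le_rfl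

/-- **Local second-level estimate on one subdivision interval.**
Let `0 < α ≤ 1/2`, `d ≥ 1`, let `x : [0,1] → ℝ^d` be continuous with `α`-Hölder seminorm at
most `M`, and let `D` be a subdivision of `[0,1]`. There is a constant `C` (depending only
on `α`) such that whenever `t_i ≤ s ≤ t ≤ t_{i+1}`,
`| ∫_s^t (x(u) − x^D(u)) ⊗ (x^D)'(u) du | ≤ C M² (t − s)^{2α}`,
the integral being a Bochner integral in `ℝ^d ⊗ ℝ^d` with the Hilbert–Schmidt norm. -/
theorem local_second_level_estimate (α : ℝ) (hα0 : 0 < α) (hα : α ≤ 1 / 2) :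
    ∃ C : ℝ, ∀ d : ℕ, 1 ≤ d → ∀ (x xD xD' : ℝ → Vec d) (D : Subdivision) (M : ℝ),
      ContinuousOn x (Icc 0 1) → 0 ≤ M →
      (∀ s t : ℝ, 0 ≤ s → s < t → t ≤ 1 → ‖x t - x s‖ ≤ M * (t - s) ^ α) →
      IsPL D x xD → IsPLDeriv D x xD' →
      ∀ i, i < D.N → ∀ s t : ℝ, D.t i ≤ s → s ≤ t → t ≤ D.t (i + 1) →
        ‖∫ u in s..t, tens (x u - xD u) (xD' u)‖ ≤ C * M ^ 2 * (t - s) ^ (2 * α) := by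
  refine ⟨2, ?_⟩
  intro d hd x xD xD' D M hcont hM hHol hPL hPLD i hi s t hts hst htt
  rcases eq_or_lt_of_le hst with rfl | hst'
  · simp [Real.zero_rpow (by positivity : (2:ℝ) * α ≠ 0), intervalIntegral.integral_same]
  -- notation
  set Δ : ℝ := D.t (i + 1) - D.t i with hΔdef
  have hΔpos : 0 < Δ := sub_pos.mpr (D.mono i hi)
  have ht0 : 0 ≤ D.t i := D.zero ▸ D.t_mono 0 i (Nat.zero_le i) hi.le
  have ht1 : D.t (i + 1) ≤ 1 := D.last ▸ D.t_mono (i + 1) D.N hi le_rfl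
  set L : Vec d := x (D.t (i + 1)) - x (D.t i) with hLdef
  have hL : ‖L‖ ≤ M * Δ ^ α := hHol (D.t i) (D.t (i + 1)) ht0 (D.mono i hi) ht1
  have hΔα : (0:ℝ) ≤ Δ ^ α := (Real.rpow_pos_of_pos hΔpos α).le
  set K : ℝ := 2 * M ^ 2 * Δ ^ (2 * α - 1) with hKdef
  have hbound : ∀ᵐ u ∂volume, u ∈ Set.uIoc s t → ‖tens (x u - xD u) (xD' u)‖ ≤ K := by
    filter_upwards [compl_mem_ae_iff.mpr (measure_singleton (D.t (i + 1)))] with u hu hmem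
    rw [Set.uIoc_of_le hst] at hmem
    have hu1 : D.t i < u := lt_of_le_of_lt hts hmem.1
    have hu2 : u < D.t (i + 1) := lt_of_le_of_ne (hmem.2.trans htt) hu
    have hxD := hPL i hi u ⟨hu1.le, hu2.le⟩
    have hxD' := hPLD i hi u ⟨hu1, hu2⟩
    have hc0 : 0 ≤ (u - D.t i) / Δ := div_nonneg (by linarith) hΔpos.le
    have hc1 : (u - D.t i) / Δ ≤ 1 := (div_le_one hΔpos).mpr (by linarith)
    have h1 : ‖x u - xD u‖ ≤ 2 * (M * Δ ^ α) := by
      rw [hxD]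
      have : x u - (x (D.t i) + ((u - D.t i) / Δ) • L)
          = (x u - x (D.t i)) - ((u - D.t i) / Δ) • L := by abel
      rw [this]
      refine (norm_sub_le _ _).trans ?_
      have ha : ‖x u - x (D.t i)‖ ≤ M * Δ ^ α := by
        refine (hHol (D.t i) u ht0 hu1 (hu2.le.trans ht1)).trans ?_
        exact mul_le_mul_of_nonneg_left
          (Real.rpow_le_rpow (by linarith) (by linarith) hα0.le) hM
      have hb : ‖((u - D.t i) / Δ) • L‖ ≤ M * Δ ^ α := by
        rw [norm_smul, Real.norm_eq_abs, abs_of_nonneg hc0]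
        calc (u - D.t i) / Δ * ‖L‖ ≤ 1 * ‖L‖ := by gcongr
          _ = ‖L‖ := one_mul _
          _ ≤ M * Δ ^ α := hL
      linarith
    have h2 : ‖xD' u‖ ≤ Δ⁻¹ * (M * Δ ^ α) := by
      rw [hxD', norm_smul, Real.norm_eq_abs, abs_of_nonneg (inv_nonneg.mpr hΔpos.le)]
      gcongr
    rw [norm_tens]
    calc ‖x u - xD u‖ * ‖xD' u‖ ≤ 2 * (M * Δ ^ α) * (Δ⁻¹ * (M * Δ ^ α)) := by
          exact mul_le_mul h1 h2 (norm_nonneg _) (by positivity)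
      _ = 2 * M ^ 2 * (Δ ^ α * Δ ^ α * Δ⁻¹) := by ring
      _ = K := by
          rw [hKdef, ← Real.rpow_add hΔpos, ← Real.rpow_neg_one Δ,
            ← Real.rpow_add hΔpos]
          ring_nf
  have hstΔ : t - s ≤ Δ := by simp only [hΔdef]; linarith
  calc ‖∫ u in s..t, tens (x u - xD u) (xD' u)‖ ≤ K * |t - s| :=
        intervalIntegral.norm_integral_le_of_norm_le_const_ae hbound
    _ = 2 * M ^ 2 * (Δ ^ (2 * α - 1) * (t - s)) := by
        rw [abs_of_nonneg (sub_nonneg.mpr hst)]; ring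
    _ ≤ 2 * M ^ 2 * ((t - s) ^ (2 * α - 1) * (t - s)) := by
        have h := Real.rpow_le_rpow_of_nonpos (sub_pos.mpr hst') hstΔ
          (by linarith : 2 * α - 1 ≤ 0)
        exact mul_le_mul_of_nonneg_left
          (mul_le_mul_of_nonneg_right h (by linarith)) (by positivity)
    _ = 2 * M ^ 2 * (t - s) ^ (2 * α) := by
        rw [mul_comm ((t - s) ^ (2 * α - 1)) (t - s), ← Real.rpow_one_add' , ]
        · ring_nf
        · linarith
        · linarith

end
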